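/- Consider the test-time quantile regression: for exchangeable data (zᵢ, Sᵢ)ᵢ∈[n+1] with values in Z × ℝ, let q̂ ∈ W = {Φ(·)ᵀβ : β ∈ ℝ^d} minimize (1/(n+1)) ∑ᵢ₌₁^{n+1} ℓ_α(w(zᵢ), Sᵢ) over w ∈ W. If conditionally on (Φ(z₁),…,Φ(z_{n+1})) the scores Sᵢ are independent with continuous distributions, then for any w ∈ W: |E[w(z_{n+1})(α − 1{S_{n+1} > q̂(z_{n+1})})]| ≤ (d/(n+1)) · E[max_{i ∈ [n+1]} |w(zᵢ)|]. -/

import Mathlib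

open MeasureTheory Finset

/-- The pinball loss with parameter `α`. -/
noncomputable def pinball (α θ s : ℝ) : ℝ := if θ ≤ s then (1 - α) * (s - θ) else α * (θ - s)




lemma pinball_shift {α : ℝ} (hα : α ∈ Set.Ioo (0:ℝ) 1) {q s w ε : ℝ} (hε : 0 < ε)
    (hsep : q ≠ s → ε * |w| < |q - s|) :
    pinball α (q + ε * w) s = pinball α q s +
      ε * (if q = s then max (-((1-α) * w)) (α * w) else w * (α - if q < s then 1 else 0)) := by
  obtain ⟨hα0, hα1⟩ := hα
  unfold pinball
  rcases lt_trichotomy q s with h | h | h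
  · have hsep' := hsep h.ne
    rw [abs_of_neg (by linarith : q - s < 0)] at hsep'
    have h1 : ε * w < s - q := by
      have : ε * w ≤ ε * |w| := mul_le_mul_of_nonneg_left (le_abs_self w) hε.le
      linarith
    have h2 : q + ε * w ≤ s := by linarith
    rw [if_pos h.le, if_pos h2, if_neg h.ne, if_pos h]
    ring
  · subst h
    rw [if_pos le_rfl, if_pos rfl]
    rcases le_or_gt w 0 with hw | hw
    · have h2 : q + ε * w ≤ q := by nlinarith
      rw [if_pos h2, max_eq_left (by nlinarith)]
      ring
    · have h2 : ¬ (q + ε * w ≤ q) := by nlinarith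
      rw [if_neg h2, max_eq_right (by nlinarith)]
      ring
  · have hsep' := hsep h.ne'
    rw [abs_of_pos (by linarith : (0:ℝ) < q - s)] at hsep'
    have h1 : s - q < ε * w := by
      have : -(ε * w) ≤ ε * |w| := by
        have : -w ≤ |w| := neg_le_abs w
        nlinarith
      linarith
    have h2 : ¬ (q + ε * w ≤ s) := by linarith
    rw [if_neg h2, if_neg (not_le.mpr h), if_neg h.ne', if_neg (not_lt.mpr h.le)]
    ring

lemma Dplus_nonneg {α : ℝ} (hα : α ∈ Set.Ioo (0:ℝ) 1) {N : ℕ} (q s w : Fin N → ℝ)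
    (hmin : ∀ t : ℝ, ∑ i, pinball α (q i) (s i) ≤ ∑ i, pinball α (q i + t * w i) (s i)) :
    0 ≤ ∑ i, (if q i = s i then max (-((1-α) * w i)) (α * w i)
              else w i * (α - if q i < s i then 1 else 0)) := by
  obtain ⟨ε, hε, hsep⟩ : ∃ ε > 0, ∀ i, q i ≠ s i → ε * |w i| < |q i - s i| := by
    rcases isEmpty_or_nonempty (Fin N) with h | h
    · exact ⟨1, one_pos, fun i => isEmptyElim i⟩
    · refine ⟨univ.inf' univ_nonempty
        (fun i => if q i = s i then 1 else |q i - s i| / (2 * (|w i| + 1))), ?_, ?_⟩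
      · rw [gt_iff_lt, Finset.lt_inf'_iff]
        intro i _
        split
        · exact one_pos
        · next hne =>
            have : (0:ℝ) < |q i - s i| := abs_pos.mpr (sub_ne_zero.mpr hne)
            positivity
      · intro i hne
        have hle : univ.inf' univ_nonempty
            (fun i => if q i = s i then 1 else |q i - s i| / (2 * (|w i| + 1)))
            ≤ |q i - s i| / (2 * (|w i| + 1)) := by
          have := Finset.inf'_le (b := i)
            (f := fun i => if q i = s i then 1 else |q i - s i| / (2 * (|w i| + 1)))
            (mem_univ i)
          rwa [if_neg hne] at this
        have habs : (0:ℝ) < |q i - s i| := abs_pos.mpr (sub_ne_zero.mpr hne)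
        have hwpos : (0:ℝ) < 2 * (|w i| + 1) := by positivity
        calc _ ≤ (|q i - s i| / (2 * (|w i| + 1))) * |w i| :=
              mul_le_mul_of_nonneg_right hle (abs_nonneg _)
          _ < |q i - s i| := by
              rw [div_mul_eq_mul_div, div_lt_iff₀ hwpos]
              nlinarith [abs_nonneg (w i)]
  have hid : ∑ i, pinball α (q i + ε * w i) (s i) =
      ∑ i, pinball α (q i) (s i) + ε * ∑ i, (if q i = s i then max (-((1-α) * w i)) (α * w i)
              else w i * (α - if q i < s i then 1 else 0)) := by
    rw [Finset.mul_sum, ← Finset.sum_add_distrib]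
    exact Finset.sum_congr rfl fun i _ => pinball_shift hα hε (hsep i)
  have := hmin ε
  rw [hid] at this
  nlinarith

lemma pinball_opt {α : ℝ} (hα : α ∈ Set.Ioo (0:ℝ) 1) {N : ℕ} (q s w : Fin N → ℝ)
    (hmin : ∀ t : ℝ, ∑ i, pinball α (q i) (s i) ≤ ∑ i, pinball α (q i + t * w i) (s i)) :
    |∑ i, w i * (α - if q i < s i then 1 else 0)| ≤
      ∑ i, (if q i = s i then 1 else 0) * |w i| := by
  obtain ⟨hα0, hα1⟩ := hα
  have h1 := Dplus_nonneg ⟨hα0, hα1⟩ q s w hmin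
  have h2 := Dplus_nonneg ⟨hα0, hα1⟩ q s (fun i => -w i) (by
    intro t
    have := hmin (-t)
    simpa [mul_comm, neg_mul, mul_neg] using this)
  rw [abs_le]
  constructor
  · -- lower bound: from h1
    have key : ∑ i, (if q i = s i then max (-((1-α) * w i)) (α * w i)
              else w i * (α - if q i < s i then 1 else 0)) ≤
        ∑ i, ((if q i = s i then 1 else 0) * |w i| + w i * (α - if q i < s i then 1 else 0)) := by
      refine Finset.sum_le_sum fun i _ => ?_
      by_cases h : q i = s i
      · rw [if_pos h, if_pos h, if_neg (by rw [h]; exact lt_irrefl _)]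
        rw [max_le_iff]
        constructor
        · nlinarith [neg_abs_le (w i), abs_nonneg (w i)]
        · nlinarith [abs_nonneg (w i)]
      · rw [if_neg h, if_neg h]; nlinarith
    rw [Finset.sum_add_distrib] at key
    linarith
  · have key : ∑ i, (if q i = s i then max (-((1-α) * -w i)) (α * -w i)
              else -w i * (α - if q i < s i then 1 else 0)) ≤
        ∑ i, ((if q i = s i then 1 else 0) * |w i| - w i * (α - if q i < s i then 1 else 0)) := by
      refine Finset.sum_le_sum fun i _ => ?_
      by_cases h : q i = s i
      · rw [if_pos h, if_pos h, if_neg (by rw [h]; exact lt_irrefl _)]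
        rw [max_le_iff]
        constructor
        · nlinarith [le_abs_self (w i), abs_nonneg (w i)]
        · nlinarith [abs_nonneg (w i), le_abs_self (w i)]
      · rw [if_neg h, if_neg h]; nlinarith
    rw [Finset.sum_sub_distrib] at key
    linarith

variable {N d : ℕ}

noncomputable def gram (u : Fin N → Fin d → ℝ) (B : Finset (Fin N)) :
    Matrix B B ℝ := fun k l => ∑ j, u k j * u l j

noncomputable def Tform (u : Fin N → Fin d → ℝ) (i₀ : Fin N) (B : Finset (Fin N))
    (sB : B → ℝ) : ℝ :=
  ∑ k, (gram u B)⁻¹.mulVec (fun l => ∑ j, u i₀ j * u (l : Fin N) j) k * sB k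

lemma mem_span_of_rel {u : Fin N → Fin d → ℝ} {C : Finset (Fin N)}
    (g : C → ℝ) (i₀ : C) (hg : ∑ k, g k • u k = 0) (hgi : g i₀ ≠ 0) :
    u i₀ ∈ Submodule.span ℝ (u '' (C.erase i₀)) := by
  classical
  have hsplit : g i₀ • u i₀ + ∑ k ∈ univ.erase i₀, g k • u k = 0 := by
    rwa [← Finset.add_sum_erase _ (fun k => g k • u (k : Fin N)) (mem_univ i₀)] at hg
  have : u i₀ = (g i₀)⁻¹ • (-(∑ k ∈ univ.erase i₀, g k • u k)) := by
    rw [eq_inv_smul_iff₀ hgi]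
    linear_combination (norm := module) hsplit
  rw [this]
  refine Submodule.smul_mem _ _ (Submodule.neg_mem _ (Submodule.sum_mem _ fun k hk => ?_))
  refine Submodule.smul_mem _ _ (Submodule.subset_span ?_)
  refine ⟨(k : Fin N), ?_, rfl⟩
  rw [Finset.mem_coe, Finset.mem_erase]
  refine ⟨?_, k.2⟩
  intro h
  exact (Finset.mem_erase.mp hk).1 (Subtype.ext h)

lemma exists_indep_span (u : Fin N → Fin d → ℝ) (C : Finset (Fin N)) :
    ∃ B ⊆ C, LinearIndependent ℝ (fun k : B => u k) ∧
      Submodule.span ℝ (u '' B) = Submodule.span ℝ (u '' C) := by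
  classical
  induction C using Finset.strongInductionOn with
  | _ C ih =>
    by_cases hC : LinearIndependent ℝ (fun k : C => u k)
    · exact ⟨C, subset_rfl, hC, rfl⟩
    · obtain ⟨g, hg, i₀, hgi⟩ := Fintype.not_linearIndependent_iff.mp hC
      have hmem : u i₀ ∈ Submodule.span ℝ (u '' (C.erase i₀)) := mem_span_of_rel g i₀ hg hgi
      obtain ⟨B, hBsub, hBind, hBspan⟩ := ih (C.erase i₀) (Finset.erase_ssubset i₀.2)
      refine ⟨B, hBsub.trans (Finset.erase_subset _ _), hBind, ?_⟩
      rw [hBspan]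
      have : (u '' C : Set (Fin d → ℝ)) = insert (u i₀) (u '' (C.erase i₀)) := by
        rw [← Set.image_insert_eq]
        congr 1
        rw [← Finset.coe_insert, Finset.insert_erase i₀.2]
      rw [this, Submodule.span_insert_eq_span hmem]

lemma gram_isUnit {u : Fin N → Fin d → ℝ} {B : Finset (Fin N)}
    (h : LinearIndependent ℝ (fun k : B => u k)) : IsUnit (gram u B).det := by
  classical
  rw [isUnit_iff_ne_zero]
  intro hdet
  obtain ⟨x, hx, hmv⟩ := (Matrix.exists_mulVec_eq_zero_iff).mpr hdet
  have hmve : ∀ k : B, (gram u B).mulVec x k = ∑ j, u k j * (∑ l : B, x l * u l j) := by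
    intro k
    rw [Matrix.mulVec, dotProduct]
    calc ∑ l : B, gram u B k l * x l
        = ∑ l : B, ∑ j, u k j * u l j * x l := by
          refine Finset.sum_congr rfl fun l _ => ?_
          rw [gram, Finset.sum_mul]
      _ = ∑ j, ∑ l : B, u k j * u l j * x l := Finset.sum_comm
      _ = ∑ j, u k j * (∑ l : B, x l * u l j) := by
          refine Finset.sum_congr rfl fun j _ => ?_
          rw [Finset.mul_sum]
          exact Finset.sum_congr rfl fun l _ => by ring
  have hquad : ∑ j, (∑ k : B, x k * u k j) ^ 2 = 0 := by
    have h0 : ∑ k : B, x k * ((gram u B).mulVec x k) = 0 := by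
      rw [hmv]; simp
    calc ∑ j, (∑ k : B, x k * u k j) ^ 2
        = ∑ j, (∑ k : B, x k * u k j) * (∑ l : B, x l * u l j) := by
          simp [sq]
      _ = ∑ j, ∑ k : B, x k * (u k j * (∑ l : B, x l * u l j)) := by
          refine Finset.sum_congr rfl fun j _ => ?_
          rw [Finset.sum_mul]
          exact Finset.sum_congr rfl fun k _ => by ring
      _ = ∑ k : B, ∑ j, x k * (u k j * (∑ l : B, x l * u l j)) := Finset.sum_comm
      _ = ∑ k : B, x k * ((gram u B).mulVec x k) := by
          refine Finset.sum_congr rfl fun k _ => ?_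
          rw [hmve k, Finset.mul_sum]
      _ = 0 := h0
  have hzero : ∀ j, ∑ k : B, x k * u k j = 0 := by
    intro j
    have := (Finset.sum_eq_zero_iff_of_nonneg (fun j _ => sq_nonneg _)).mp hquad j (mem_univ j)
    exact pow_eq_zero_iff two_ne_zero |>.mp this
  exact hx (funext fun k => (Fintype.linearIndependent_iff.mp h
    (fun k => x k) (funext fun j => by simpa using hzero j)) k)

lemma key_la (u : Fin N → Fin d → ℝ) (s : Fin N → ℝ) (βh : Fin d → ℝ)
    (A : Finset (Fin N)) (hcard : d < A.card)
    (hs : ∀ k ∈ A, ∑ j, u k j * βh j = s k) :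
    ∃ i₀ ∈ A, ∃ B : Finset (Fin N), B ⊆ A.erase i₀ ∧
      s i₀ = Tform u i₀ B (fun k => s k) := by
  classical
  have hnotind : ¬ LinearIndependent ℝ (fun k : A => u k) := by
    intro h
    have := h.fintype_card_le_finrank
    rw [Module.finrank_fin_fun, Fintype.card_coe] at this
    omega
  obtain ⟨g, hg, i₀, hgi⟩ := Fintype.not_linearIndependent_iff.mp hnotind
  have hmem : u i₀ ∈ Submodule.span ℝ (u '' (A.erase i₀)) := mem_span_of_rel g i₀ hg hgi
  obtain ⟨B, hBsub, hBind, hBspan⟩ := exists_indep_span u (A.erase i₀)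
  rw [← hBspan, Set.image_eq_range] at hmem
  obtain ⟨c₀, hc₀⟩ := (Submodule.mem_span_range_iff_exists_fun ℝ).mp hmem
  let e : ((↑B : Set (Fin N)) : Type _) ≃ {x // x ∈ B} :=
    Equiv.subtypeEquivRight (fun x => Finset.mem_coe)
  let c : {x // x ∈ B} → ℝ := fun k => c₀ (e.symm k)
  have hc : ∑ k : {x // x ∈ B}, c k • u (k : Fin N) = u i₀ := by
    rw [← hc₀]
    exact (Fintype.sum_equiv e (fun k => c₀ k • u (k : Fin N))
      (fun k => c k • u (k : Fin N)) (fun k => by simp [c, e, Equiv.subtypeEquivRight]; rfl)).symm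
  refine ⟨i₀, i₀.2, B, hBsub, ?_⟩
  -- gram relation
  have hmv : (gram u B).mulVec c = fun l : {x // x ∈ B} => ∑ j, u i₀ j * u (l : Fin N) j := by
    funext l
    rw [Matrix.mulVec, dotProduct]
    calc ∑ k : B, gram u B l k * c k
        = ∑ k : B, ∑ j, u l j * u k j * c k := by
          refine Finset.sum_congr rfl fun k _ => ?_
          rw [gram, Finset.sum_mul]
      _ = ∑ j, ∑ k : B, u l j * u k j * c k := Finset.sum_comm
      _ = ∑ j, u l j * (∑ k : B, c k * u k j) := by
          refine Finset.sum_congr rfl fun j _ => ?_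
          rw [Finset.mul_sum]
          exact Finset.sum_congr rfl fun k _ => by ring
      _ = ∑ j, u i₀ j * u l j := by
          refine Finset.sum_congr rfl fun j _ => ?_
          have : (∑ k : B, c k • u k) j = u i₀ j := by rw [hc]
          simp only [Finset.sum_apply, Pi.smul_apply, smul_eq_mul] at this
          rw [this]; ring
  have hinv : (gram u B)⁻¹.mulVec (fun l => ∑ j, u i₀ j * u (l : Fin N) j) = c := by
    rw [← hmv, Matrix.mulVec_mulVec, Matrix.nonsing_inv_mul _ (gram_isUnit hBind),
      Matrix.one_mulVec]
  unfold Tform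
  rw [hinv]
  have hBA : ∀ k : B, (k : Fin N) ∈ A := fun k => Finset.mem_of_mem_erase (hBsub k.2)
  calc s i₀ = ∑ j, u i₀ j * βh j := (hs i₀ i₀.2).symm
    _ = ∑ j, (∑ k : B, c k • u (k : Fin N)) j * βh j := by rw [hc]
    _ = ∑ j, ∑ k : B, c k * u k j * βh j := by
        refine Finset.sum_congr rfl fun j _ => ?_
        simp only [Finset.sum_apply, Pi.smul_apply, smul_eq_mul, Finset.sum_mul]
    _ = ∑ k : B, ∑ j, c k * u k j * βh j := Finset.sum_comm
    _ = ∑ k : B, c k * ∑ j, u k j * βh j := by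
        refine Finset.sum_congr rfl fun k _ => ?_
        rw [Finset.mul_sum]
        exact Finset.sum_congr rfl fun j _ => by ring
    _ = ∑ k : B, c k * s k := by
        refine Finset.sum_congr rfl fun k _ => by rw [hs _ (hBA k)]

section meas
variable {X : Type*} {mX : MeasurableSpace X} {m : Type*} [Fintype m] [DecidableEq m]

lemma measurable_det' {f : X → Matrix m m ℝ} (hf : ∀ i j, Measurable fun x => f x i j) :
    Measurable fun x => (f x).det := by
  simp only [Matrix.det_apply']
  exact Finset.measurable_sum _ fun σ _ =>
    (Finset.measurable_prod _ fun i _ => hf (σ i) i).const_mul _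

lemma measurable_adjugate' {f : X → Matrix m m ℝ} (hf : ∀ i j, Measurable fun x => f x i j)
    (i j : m) : Measurable fun x => (f x).adjugate i j := by
  simp only [Matrix.adjugate_apply]
  refine measurable_det' fun a b => ?_
  simp only [Matrix.updateRow_apply]
  by_cases h : a = j
  · simp [h]
  · simpa [h] using hf a b

lemma measurable_inv_entry {f : X → Matrix m m ℝ} (hf : ∀ i j, Measurable fun x => f x i j)
    (i j : m) : Measurable fun x => (f x)⁻¹ i j := by
  simp only [Matrix.inv_def, Matrix.smul_apply, Ring.inverse_eq_inv', smul_eq_mul]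
  exact ((measurable_det' hf).inv).mul (measurable_adjugate' hf i j)

end meas

variable {N d : ℕ}

lemma measurable_Tform {X : Type*} {mX : MeasurableSpace X} (i₀ : Fin N) (B : Finset (Fin N))
    {u : X → Fin N → Fin d → ℝ} {sB : X → {x // x ∈ B} → ℝ}
    (hu : ∀ k j, Measurable fun x => u x k j)
    (hsB : ∀ k, Measurable fun x => sB x k) :
    Measurable fun x => Tform (u x) i₀ B (sB x) := by
  unfold Tform
  refine Finset.measurable_sum _ fun k _ => Measurable.mul ?_ (hsB k)
  unfold Matrix.mulVec dotProduct
  refine Finset.measurable_sum _ fun l _ => Measurable.mul ?_ ?_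
  · exact measurable_inv_entry (f := fun x => gram (u x) B)
      (fun a b => Finset.measurable_sum _ fun j _ => (hu a j).mul (hu b j)) k l
  · exact Finset.measurable_sum _ fun j _ => (hu i₀ j).mul (hu l j)
section main
variable {Z : Type*} {n d : ℕ}

noncomputable def Ffun (α : ℝ) (Φ : Z → Fin d → ℝ) (Q : (Fin (n+1) → Z × ℝ) → Fin d → ℝ)
    (β : Fin d → ℝ) (i : Fin (n+1)) (data : Fin (n+1) → Z × ℝ) : ℝ :=
  (∑ j, Φ (data i).1 j * β j) *
    (α - if (∑ j, Φ (data i).1 j * Q data j) < (data i).2 then 1 else 0)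

variable [MeasurableSpace Z]

lemma measurable_Ffun {α : ℝ} {Φ : Z → Fin d → ℝ} {Q : (Fin (n+1) → Z × ℝ) → Fin d → ℝ}
    {β : Fin d → ℝ} (hΦ : Measurable Φ) (hQ : Measurable Q) (i : Fin (n+1)) :
    Measurable (Ffun α Φ Q β i) := by
  have h1 : Measurable fun data : Fin (n+1) → Z × ℝ => (data i).1 :=
    (measurable_pi_apply i).fst
  have h2 : Measurable fun data : Fin (n+1) → Z × ℝ => (data i).2 :=
    (measurable_pi_apply i).snd
  have hw : Measurable fun data : Fin (n+1) → Z × ℝ => ∑ j, Φ (data i).1 j * β j :=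
    Finset.measurable_sum _ fun j _ =>
      ((measurable_pi_apply j).comp (hΦ.comp h1)).mul_const _
  have hq : Measurable fun data : Fin (n+1) → Z × ℝ => ∑ j, Φ (data i).1 j * Q data j :=
    Finset.measurable_sum _ fun j _ =>
      ((measurable_pi_apply j).comp (hΦ.comp h1)).mul ((measurable_pi_apply j).comp hQ)
  exact hw.mul (measurable_const.sub
    (Measurable.ite (measurableSet_lt hq h2) measurable_const measurable_const))

end main


open Classical in
/-- Test-time quantile regression bound: for exchangeable data `(zᵢ, Sᵢ)` and a
permutation-invariant minimizer `q̂ = Φ(·)ᵀ(Q data)` of the average pinball loss, if the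
scores are conditionally independent with continuous distributions given the `Φ(zᵢ)`,
then for any weight `w = Φ(·)ᵀβ`,
`|E[w(z_{n+1})(α − 1{S_{n+1} > q̂(z_{n+1})})]| ≤ (d/(n+1)) E[maxᵢ |w(zᵢ)|]`. -/
theorem stmt15 {Ω Z : Type*} [MeasurableSpace Ω] [MeasurableSpace Z]
    {μ : Measure Ω} [IsProbabilityMeasure μ]
    {n d : ℕ} (α : ℝ) (hα : α ∈ Set.Ioo (0 : ℝ) 1)
    (Φ : Z → Fin d → ℝ) (z : Fin (n + 1) → Ω → Z) (S : Fin (n + 1) → Ω → ℝ)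
    (Q : (Fin (n + 1) → Z × ℝ) → (Fin d → ℝ))
    (hΦ : Measurable Φ) (hz : ∀ i, Measurable (z i)) (hS : ∀ i, Measurable (S i))
    (hQ : Measurable Q)
    (hQsymm : ∀ (π : Equiv.Perm (Fin (n + 1))) (data : Fin (n + 1) → Z × ℝ),
      Q (data ∘ π) = Q data)
    (hmin : ∀ (data : Fin (n + 1) → Z × ℝ) (β : Fin d → ℝ),
      (1 / (n + 1) : ℝ) * ∑ i, pinball α (∑ j, Φ (data i).1 j * Q data j) (data i).2 ≤
      (1 / (n + 1) : ℝ) * ∑ i, pinball α (∑ j, Φ (data i).1 j * β j) (data i).2)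
    (hexch : ∀ π : Equiv.Perm (Fin (n + 1)),
      Measure.map (fun ω => fun i => (z (π i) ω, S (π i) ω)) μ =
      Measure.map (fun ω => fun i => (z i ω, S i ω)) μ)
    (hcont : ∀ i : Fin (n + 1), ∀ T : Ω → ℝ,
      Measurable[(⨆ k : Fin (n + 1),
          MeasurableSpace.comap (fun ω => Φ (z k ω)) inferInstance) ⊔
        (⨆ k ∈ ({i}ᶜ : Set (Fin (n + 1))),
          MeasurableSpace.comap (S k) inferInstance)] T →
      μ {ω | S i ω = T ω} = 0)
    (β : Fin d → ℝ)
    (hint : Integrable (fun ω =>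
      Finset.univ.sup' Finset.univ_nonempty (fun i => |∑ j, Φ (z i ω) j * β j|)) μ) :
    |∫ ω, (∑ j, Φ (z (Fin.last n) ω) j * β j) *
        (α - if (∑ j, Φ (z (Fin.last n) ω) j * Q (fun i => (z i ω, S i ω)) j) <
            S (Fin.last n) ω then 1 else 0) ∂μ| ≤
    (d / (n + 1) : ℝ) * ∫ ω, Finset.univ.sup' Finset.univ_nonempty
        (fun i => |∑ j, Φ (z i ω) j * β j|) ∂μ := by
  obtain ⟨hα0, hα1⟩ := hα
  have hD : Measurable (fun ω => (fun i => (z i ω, S i ω)) : Ω → Fin (n+1) → Z × ℝ) :=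
    measurable_pi_lambda _ fun i => ((hz i).prodMk (hS i))
  set D : Ω → (Fin (n+1) → Z × ℝ) := fun ω i => (z i ω, S i ω) with hDdef
  set M : Ω → ℝ := fun ω => Finset.univ.sup' Finset.univ_nonempty
      (fun i => |∑ j, Φ (z i ω) j * β j|) with hMdef
  have hintM : Integrable M μ := hint
  have hMnn : ∀ ω, 0 ≤ M ω := fun ω =>
    le_trans (abs_nonneg (∑ j, Φ (z 0 ω) j * β j))
      (Finset.le_sup' (fun i => |∑ j, Φ (z i ω) j * β j|) (mem_univ 0))
  have hbound : ∀ ω i, |Ffun α Φ Q β i (D ω)| ≤ M ω := by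
    intro ω i
    rw [Ffun, abs_mul]
    have h1 : |∑ j, Φ ((D ω i).1) j * β j| ≤ M ω :=
      Finset.le_sup' (fun i => |∑ j, Φ (z i ω) j * β j|) (mem_univ i)
    have h2 : |α - if (∑ j, Φ ((D ω i).1) j * Q (D ω) j) < (D ω i).2 then 1 else 0| ≤ 1 := by
      split
      · rw [abs_of_nonpos (by linarith)]; linarith
      · rw [sub_zero, abs_of_nonneg hα0.le]; linarith
    calc |∑ j, Φ ((D ω i).1) j * β j| *
          |α - if (∑ j, Φ ((D ω i).1) j * Q (D ω) j) < (D ω i).2 then 1 else 0|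
        ≤ |∑ j, Φ ((D ω i).1) j * β j| * 1 :=
          mul_le_mul_of_nonneg_left h2 (abs_nonneg _)
      _ ≤ M ω := by rw [mul_one]; exact h1
  have hInt : ∀ i, Integrable (fun ω => Ffun α Φ Q β i (D ω)) μ := fun i =>
    hintM.mono' ((measurable_Ffun hΦ hQ i).comp hD).aestronglyMeasurable
      (ae_of_all _ fun ω => by rw [Real.norm_eq_abs]; exact hbound ω i)
  -- Step 1: exchangeability
  have heq : ∀ i, ∫ ω, Ffun α Φ Q β i (D ω) ∂μ = ∫ ω, Ffun α Φ Q β (Fin.last n) (D ω) ∂μ := by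
    intro i
    set π := Equiv.swap i (Fin.last n) with hπ
    have hswap : ∀ ω, Ffun α Φ Q β (Fin.last n) (fun k => D ω (π k)) = Ffun α Φ Q β i (D ω) := by
      intro ω
      show Ffun α Φ Q β (Fin.last n) (D ω ∘ π) = Ffun α Φ Q β i (D ω)
      rw [Ffun, Ffun, hQsymm π (D ω)]
      simp only [Function.comp_apply, hπ, Equiv.swap_apply_right]
    have hπD : Measurable (fun ω => (fun k => (z (π k) ω, S (π k) ω)) : Ω → Fin (n+1) → Z × ℝ) :=
      measurable_pi_lambda _ fun k => ((hz _).prodMk (hS _))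
    calc ∫ ω, Ffun α Φ Q β i (D ω) ∂μ
        = ∫ ω, Ffun α Φ Q β (Fin.last n) (fun k => (z (π k) ω, S (π k) ω)) ∂μ :=
          integral_congr_ae (Filter.Eventually.of_forall fun ω => (hswap ω).symm)
      _ = ∫ data, Ffun α Φ Q β (Fin.last n) data
            ∂(Measure.map (fun ω => fun k => (z (π k) ω, S (π k) ω)) μ) :=
          (integral_map hπD.aemeasurable
            (measurable_Ffun hΦ hQ _).aestronglyMeasurable).symm
      _ = ∫ data, Ffun α Φ Q β (Fin.last n) data
            ∂(Measure.map (fun ω => fun k => (z k ω, S k ω)) μ) := by rw [hexch π]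
      _ = ∫ ω, Ffun α Φ Q β (Fin.last n) (D ω) ∂μ :=
          integral_map hD.aemeasurable (measurable_Ffun hΦ hQ _).aestronglyMeasurable
  have hsum : ∫ ω, (∑ i, Ffun α Φ Q β i (D ω)) ∂μ =
      (n+1 : ℝ) * ∫ ω, Ffun α Φ Q β (Fin.last n) (D ω) ∂μ := by
    rw [integral_finset_sum _ (fun i _ => hInt i), Finset.sum_congr rfl (fun i _ => heq i)]
    simp [card_univ, nsmul_eq_mul]
  -- Step 2: pointwise optimality
  have hopt : ∀ ω, |∑ i, Ffun α Φ Q β i (D ω)| ≤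
      ∑ i, (if (∑ j, Φ (z i ω) j * Q (D ω) j) = S i ω then 1 else 0) *
        |∑ j, Φ (z i ω) j * β j| := by
    intro ω
    refine pinball_opt ⟨hα0, hα1⟩ (fun i => ∑ j, Φ (z i ω) j * Q (D ω) j)
      (fun i => S i ω) (fun i => ∑ j, Φ (z i ω) j * β j) ?_
    intro t
    have h := hmin (D ω) (fun j => Q (D ω) j + t * β j)
    have hpos : (0:ℝ) < 1/(n+1) := by positivity
    rw [mul_le_mul_iff_right₀ hpos] at h
    have hexp : ∀ i : Fin (n+1), ∑ j, Φ ((D ω i).1) j * (Q (D ω) j + t * β j) =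
        (∑ j, Φ (z i ω) j * Q (D ω) j) + t * ∑ j, Φ (z i ω) j * β j := by
      intro i
      rw [Finset.mul_sum, ← Finset.sum_add_distrib]
      exact Finset.sum_congr rfl fun j _ => by show Φ (z i ω) j * _ = _; ring
    calc ∑ i, pinball α (∑ j, Φ (z i ω) j * Q (D ω) j) (S i ω)
        = ∑ i, pinball α (∑ j, Φ ((D ω i).1) j * Q (D ω) j) ((D ω i).2) := rfl
      _ ≤ ∑ i, pinball α (∑ j, Φ ((D ω i).1) j * (Q (D ω) j + t * β j)) ((D ω i).2) := h
      _ = ∑ i, pinball α ((∑ j, Φ (z i ω) j * Q (D ω) j) + t * ∑ j, Φ (z i ω) j * β j)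
            (S i ω) := Finset.sum_congr rfl fun i _ => by rw [hexp i]
  -- Step 3: a.e. at most d interpolation points
  have hTnull : ∀ (i₀ : Fin (n+1)) (B : Finset (Fin (n+1))), i₀ ∉ B →
      μ {ω | S i₀ ω = Tform (fun k => Φ (z k ω)) i₀ B (fun k => S (k : Fin (n+1)) ω)} = 0 := by
    intro i₀ B hB
    refine hcont i₀ _ ?_
    set m₀ := (⨆ k : Fin (n + 1),
          MeasurableSpace.comap (fun ω => Φ (z k ω)) inferInstance) ⊔
        (⨆ k ∈ ({i₀}ᶜ : Set (Fin (n + 1))),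
          MeasurableSpace.comap (S k) inferInstance) with hm₀
    have hu : ∀ (k : Fin (n+1)) (j : Fin d), Measurable[m₀] fun ω => Φ (z k ω) j := by
      intro k j
      have h1 : Measurable[m₀] fun ω => Φ (z k ω) := by
        rw [measurable_iff_comap_le]
        exact le_trans (le_iSup
          (fun k => MeasurableSpace.comap (fun ω => Φ (z k ω)) inferInstance) k) le_sup_left
      exact (measurable_pi_apply j).comp h1
    have hsB : ∀ k : {x // x ∈ B}, Measurable[m₀] (S (k : Fin (n+1))) := by
      intro k
      rw [measurable_iff_comap_le]
      refine le_trans ?_ le_sup_right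
      have hk : (k : Fin (n+1)) ∈ ({i₀}ᶜ : Set (Fin (n+1))) := by
        simp only [Set.mem_compl_iff, Set.mem_singleton_iff]
        exact fun h => hB (h ▸ k.2)
      exact le_iSup₂ (f := fun k (_ : k ∈ ({i₀}ᶜ : Set (Fin (n+1)))) =>
        MeasurableSpace.comap (S k) inferInstance) _ hk
    exact measurable_Tform i₀ B hu hsB
  have hbad : μ (⋃ i₀ : Fin (n+1), ⋃ B ∈ {B : Finset (Fin (n+1)) | i₀ ∉ B},
      {ω | S i₀ ω = Tform (fun k => Φ (z k ω)) i₀ B (fun k => S (k : Fin (n+1)) ω)}) = 0 := by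
    rw [measure_iUnion_null_iff]
    intro i₀
    rw [measure_biUnion_null_iff (Set.to_countable _)]
    exact fun B hB => hTnull i₀ B hB
  have hcard : ∀ᵐ ω ∂μ, ((univ.filter
      (fun i => (∑ j, Φ (z i ω) j * Q (D ω) j) = S i ω)).card ≤ d) := by
    rw [ae_iff]
    refine measure_mono_null ?_ hbad
    intro ω hω
    simp only [Set.mem_setOf_eq, not_le] at hω
    obtain ⟨A, hAsub, hAcard⟩ := Finset.exists_subset_card_eq hω
    obtain ⟨i₀, hi₀A, B, hBsub, hT⟩ := key_la (fun k => Φ (z k ω)) (fun k => S k ω)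
      (Q (D ω)) A (by omega) (fun k hk => (Finset.mem_filter.mp (hAsub hk)).2)
    refine Set.mem_iUnion.mpr ⟨i₀, Set.mem_iUnion₂.mpr ⟨B, ?_, hT⟩⟩
    exact fun h => (Finset.mem_erase.mp (hBsub h)).1 rfl
  have haebound : ∀ᵐ ω ∂μ, |∑ i, Ffun α Φ Q β i (D ω)| ≤ (d : ℝ) * M ω := by
    filter_upwards [hcard] with ω hc
    refine le_trans (hopt ω) ?_
    have h1 : ∑ i, (if (∑ j, Φ (z i ω) j * Q (D ω) j) = S i ω then 1 else 0) *
        |∑ j, Φ (z i ω) j * β j| =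
        ∑ i ∈ univ.filter (fun i => (∑ j, Φ (z i ω) j * Q (D ω) j) = S i ω),
          |∑ j, Φ (z i ω) j * β j| := by
      rw [Finset.sum_filter]
      exact Finset.sum_congr rfl fun i _ => by split <;> simp
    rw [h1]
    calc _ ≤ (univ.filter (fun i => (∑ j, Φ (z i ω) j * Q (D ω) j) = S i ω)).card • M ω :=
          Finset.sum_le_card_nsmul _ _ _
            (fun i _ => Finset.le_sup' (fun i => |∑ j, Φ (z i ω) j * β j|) (mem_univ i))
      _ = ((univ.filter (fun i => (∑ j, Φ (z i ω) j * Q (D ω) j) = S i ω)).card : ℝ) * M ω :=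
          nsmul_eq_mul _ _
      _ ≤ (d : ℝ) * M ω := mul_le_mul_of_nonneg_right (Nat.cast_le.mpr hc) (hMnn ω)
  -- Final assembly
  have hGint : Integrable (fun ω => ∑ i, Ffun α Φ Q β i (D ω)) μ :=
    integrable_finset_sum _ (fun i _ => hInt i)
  have h2 : |∫ ω, (∑ i, Ffun α Φ Q β i (D ω)) ∂μ| ≤ (d : ℝ) * ∫ ω, M ω ∂μ := by
    calc |∫ ω, (∑ i, Ffun α Φ Q β i (D ω)) ∂μ|
        ≤ ∫ ω, |∑ i, Ffun α Φ Q β i (D ω)| ∂μ := by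
          simpa [Real.norm_eq_abs] using
            norm_integral_le_integral_norm (fun ω => ∑ i, Ffun α Φ Q β i (D ω)) (μ := μ)
      _ ≤ ∫ ω, (d : ℝ) * M ω ∂μ := integral_mono_ae hGint.abs (hintM.const_mul _) haebound
      _ = (d : ℝ) * ∫ ω, M ω ∂μ := integral_const_mul _ _
  have hfin : |∫ ω, Ffun α Φ Q β (Fin.last n) (D ω) ∂μ| ≤ (d/(n+1) : ℝ) * ∫ ω, M ω ∂μ := by
    have hne : (n+1 : ℝ) ≠ 0 := by positivity
    have h1 : ∫ ω, Ffun α Φ Q β (Fin.last n) (D ω) ∂μ =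
        (1/(n+1) : ℝ) * ∫ ω, (∑ i, Ffun α Φ Q β i (D ω)) ∂μ := by
      rw [hsum]; field_simp
    rw [h1, abs_mul, abs_of_nonneg (by positivity : (0:ℝ) ≤ 1/(n+1))]
    calc (1/(n+1) : ℝ) * |∫ ω, (∑ i, Ffun α Φ Q β i (D ω)) ∂μ|
        ≤ (1/(n+1) : ℝ) * ((d : ℝ) * ∫ ω, M ω ∂μ) :=
          mul_le_mul_of_nonneg_left h2 (by positivity)
      _ = (d/(n+1) : ℝ) * ∫ ω, M ω ∂μ := by ring
  exact hfin
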